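/- Correctness of the arithmetical definition of exponentiation: For all natural numbers x, n, y, one has y = x^n if and only if either (n = 0 and y = 1), or (1 ≤ n and there exist natural numbers N and b such that: every natural number i with 1 ≤ i < n divides b; N % (b+1) = x; N % (n·b+1) = y; and for every i < n - 1, N % ((i+2)·b + 1) = x · (N % ((i+1)·b + 1))). -/

import Mathlib

private lemma pow_arith_coprime_aux {b n : ℕ} (hdvd : ∀ i : ℕ, 1 ≤ i → i < n → i ∣ b)
    {i j : ℕ} (hij : i < j) (hj : j < n) :
    Nat.Coprime ((i + 1) * b + 1) ((j + 1) * b + 1) := by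
  obtain ⟨k, rfl⟩ : ∃ k, j = i + k + 1 := ⟨j - i - 1, by omega⟩
  have h1 : Nat.Coprime ((i + 1) * b + 1) b := by
    simp [Nat.add_comm, Nat.mul_comm]
  set d := Nat.gcd ((i + 1) * b + 1) ((i + k + 1 + 1) * b + 1) with hd
  have hd1 : d ∣ (i + 1) * b + 1 := Nat.gcd_dvd_left _ _
  have hd2 : d ∣ (i + 1) * b + 1 + (k + 1) * b := by
    have : (i + 1) * b + 1 + (k + 1) * b = (i + k + 1 + 1) * b + 1 := by ring
    rw [this]; exact Nat.gcd_dvd_right _ _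
  have hsub : d ∣ (k + 1) * b := (Nat.dvd_add_right hd1).mp hd2
  have hcb : Nat.Coprime d b := Nat.Coprime.coprime_dvd_left hd1 h1
  have hk1 : d ∣ (k + 1) := hcb.dvd_of_dvd_mul_right hsub
  have hdb : d ∣ b := hk1.trans (hdvd (k + 1) (by omega) (by omega))
  have : d ∣ 1 := (Nat.dvd_add_right (hdb.mul_left (i + 1))).mp hd1
  exact Nat.dvd_one.mp this

theorem pow_arith_correct (x n y : ℕ) :
    y = x ^ n ↔
      (n = 0 ∧ y = 1) ∨
      (1 ≤ n ∧ ∃ N b : ℕ,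
        (∀ i : ℕ, 1 ≤ i → i < n → i ∣ b) ∧
        N % (b + 1) = x ∧
        N % (n * b + 1) = y ∧
        ∀ i : ℕ, i < n - 1 →
          N % ((i + 2) * b + 1) = x * (N % ((i + 1) * b + 1))) := by
  constructor
  · rintro rfl
    rcases Nat.eq_zero_or_pos n with rfl | hn
    · exact Or.inl ⟨rfl, by simp⟩
    refine Or.inr ⟨hn, ?_⟩
    set b : ℕ := (n - 1).factorial * (x ^ n + 1) with hb
    have hdvd : ∀ i : ℕ, 1 ≤ i → i < n → i ∣ b :=
      fun i h1 h2 => Dvd.dvd.mul_right (Nat.dvd_factorial h1 (by omega)) _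
    have hble : ∀ i : ℕ, i < n → x ^ (i + 1) ≤ b := by
      intro i hi
      have hb1 : x ^ n + 1 ≤ b := Nat.le_mul_of_pos_left _ (Nat.factorial_pos _)
      rcases Nat.eq_zero_or_pos x with rfl | hx
      · have : (0:ℕ) ^ (i + 1) = 0 := by simp
        omega
      · have : x ^ (i + 1) ≤ x ^ n := Nat.pow_le_pow_right hx (by omega)
        omega
    have hlt : ∀ i : ℕ, i < n → x ^ (i + 1) < (i + 1) * b + 1 := by
      intro i hi
      have := hble i hi
      have : b ≤ (i + 1) * b := Nat.le_mul_of_pos_left _ (by omega)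
      omega
    have co : (List.range n).Pairwise (Function.onFun Nat.Coprime fun i => (i + 1) * b + 1) := by
      refine (List.pairwise_lt_range (n := n)).imp_of_mem ?_
      intro i j hi hj hij
      exact pow_arith_coprime_aux hdvd hij (List.mem_range.mp hj)
    obtain ⟨N, hN⟩ := Nat.chineseRemainderOfList (fun i => x ^ (i + 1))
      (fun i => (i + 1) * b + 1) (List.range n) co
    have hNmod : ∀ i : ℕ, i < n → N % ((i + 1) * b + 1) = x ^ (i + 1) := by
      intro i hi
      have h := hN i (List.mem_range.mpr hi)
      have h' : N % ((i + 1) * b + 1) = x ^ (i + 1) % ((i + 1) * b + 1) := h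
      rw [h', Nat.mod_eq_of_lt (hlt i hi)]
    refine ⟨N, b, hdvd, ?_, ?_, ?_⟩
    · have := hNmod 0 hn
      simpa using this
    · have := hNmod (n - 1) (by omega)
      have hn1 : n - 1 + 1 = n := by omega
      rw [hn1] at this
      exact this
    · intro i hi
      have h1 := hNmod i (by omega)
      have h2 := hNmod (i + 1) (by omega)
      rw [h1]
      have : i + 1 + 1 = i + 2 := by omega
      rw [this] at h2
      rw [h2]; ring
  · rintro (⟨rfl, rfl⟩ | ⟨hn, N, b, hdvd, h1, h2, h3⟩)
    · simp
    · obtain ⟨m, rfl⟩ : ∃ m, n = m + 1 := ⟨n - 1, by omega⟩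
      have key : ∀ i : ℕ, i ≤ m → N % ((i + 1) * b + 1) = x ^ (i + 1) := by
        intro i hi
        induction i with
        | zero => simpa using h1
        | succ k ih =>
          have hk := ih (by omega)
          have h3k := h3 k (by omega)
          rw [show k + 1 + 1 = k + 2 from rfl] at *
          rw [h3k, hk]; ring
      have := key m le_rfl
      rw [h2] at this
      exact this
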